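/- G_NNI(X;Y) = 0 if and only if for every pair (x,y) with p_{XY}(x,y) > 0, either p_{X|Y}(x|y) = 1 or p_{Y|X}(y|x) = 1 (equivalently, the characteristic bipartite graph of (X,Y) contains no path of length 3). -/

import Mathlib

open scoped BigOperators Pointwise Classical

noncomputable section

namespace GW

/-- A probability mass function on a finite type. -/
def IsPMF {α : Type} [Fintype α] (p : α → ℝ) : Prop :=
  (∀ a, 0 ≤ p a) ∧ ∑ a, p a = 1

/-- Distribution (pmf) of the random variable `f` under the pmf `p`. -/
def dist {α β : Type} [Fintype α] (p : α → ℝ) (f : α → β) : β → ℝ :=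
  fun b => ∑ a, if f a = b then p a else 0

/-- Shannon entropy (base 2) of the random variable `f` under the pmf `p`. -/
def H {α β : Type} [Fintype α] [Fintype β] (p : α → ℝ) (f : α → β) : ℝ :=
  ∑ b, -(dist p f b * Real.logb 2 (dist p f b))

/-- Mutual information `I(f; g)` under `p`. -/
def I2 {α β γ : Type} [Fintype α] [Fintype β] [Fintype γ]
    (p : α → ℝ) (f : α → β) (g : α → γ) : ℝ :=
  H p f + H p g - H p (fun a => (f a, g a))

/-- Conditional entropy `H(f | g)` under `p`. -/
def Hc {α β γ : Type} [Fintype α] [Fintype β] [Fintype γ]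
    (p : α → ℝ) (f : α → β) (g : α → γ) : ℝ :=
  H p (fun a => (f a, g a)) - H p g

/-- Conditional mutual information `I(f; g | h)` under `p`. -/
def Ic {α β γ δ : Type} [Fintype α] [Fintype β] [Fintype γ] [Fintype δ]
    (p : α → ℝ) (f : α → β) (g : α → γ) (h : α → δ) : ℝ :=
  Hc p f h + Hc p g h - Hc p (fun a => (f a, g a)) h

/-- Independence of the random variables `f` and `g` under `p`. -/
def Indep {α β γ : Type} [Fintype α] (p : α → ℝ) (f : α → β) (g : α → γ) : Prop :=
  ∀ b c, dist p (fun a => (f a, g a)) (b, c) = dist p f b * dist p g c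

/-- `q` is a joint pmf on `X × Y × U` whose `(X,Y)`-marginal is `p`; i.e. `U` is an
auxiliary random variable defined jointly with `(X,Y)` via a conditional pmf `p_{U|XY}`. -/
def IsAux {X Y U : Type} [Fintype X] [Fintype Y] [Fintype U]
    (p : X × Y → ℝ) (q : X × Y × U → ℝ) : Prop :=
  IsPMF q ∧ ∀ x y, (∑ u, q (x, y, u)) = p (x, y)

/-- Coordinate map onto `X`. -/
def cX {X Y U : Type} : X × Y × U → X := fun a => a.1
/-- Coordinate map onto `Y`. -/
def cY {X Y U : Type} : X × Y × U → Y := fun a => a.2.1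
/-- Coordinate map onto `U`. -/
def cU {X Y U : Type} : X × Y × U → U := fun a => a.2.2
/-- Coordinate map onto `X × Y`. -/
def cXY {X Y U : Type} : X × Y × U → X × Y := fun a => (a.1, a.2.1)

/-- The mutual information region `𝓘_{XY}`. -/
def MIRegion {X Y : Type} [Fintype X] [Fintype Y] (p : X × Y → ℝ) : Set (ℝ × ℝ × ℝ) :=
  { v | ∃ (U : Type) (_ : Fintype U) (q : X × Y × U → ℝ), IsAux p q ∧
      v = (I2 q cX cU, I2 q cY cU, I2 q cXY cU) }

/-- The outer region `𝓘ᵒ_{XY}`. -/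
def OuterRegion {X Y : Type} [Fintype X] [Fintype Y] (p : X × Y → ℝ) : Set (ℝ × ℝ × ℝ) :=
  { v | 0 ≤ v.1 ∧ 0 ≤ v.2.1 ∧ v.1 + v.2.1 - v.2.2 ≤ I2 p Prod.fst Prod.snd ∧
        0 ≤ v.2.2 - v.2.1 ∧ v.2.2 - v.2.1 ≤ Hc p Prod.fst Prod.snd ∧
        0 ≤ v.2.2 - v.1 ∧ v.2.2 - v.1 ≤ Hc p Prod.snd Prod.fst }

/-- Maximal interaction information `G_NNI(X; Y)`. -/
def GNNI {X Y : Type} [Fintype X] [Fintype Y] (p : X × Y → ℝ) : ℝ :=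
  sSup { r | ∃ (U : Type) (_ : Fintype U) (q : X × Y × U → ℝ), IsAux p q ∧
      r = Ic q cX cY cU - I2 p Prod.fst Prod.snd }

/-- Asymmetric private interaction information `G_PNI(X → Y)`. -/
def GPNI {X Y : Type} [Fintype X] [Fintype Y] (p : X × Y → ℝ) : ℝ :=
  sSup { r | ∃ (U : Type) (_ : Fintype U) (q : X × Y × U → ℝ), IsAux p q ∧
      Indep q cU cX ∧ r = Ic q cX cY cU - I2 p Prod.fst Prod.snd }

/-- Symmetric private interaction information `G_PPI(X; Y)`. -/
def GPPI {X Y : Type} [Fintype X] [Fintype Y] (p : X × Y → ℝ) : ℝ :=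
  sSup { r | ∃ (U : Type) (_ : Fintype U) (q : X × Y × U → ℝ), IsAux p q ∧
      Indep q cU cX ∧ Indep q cU cY ∧ r = Ic q cX cY cU - I2 p Prod.fst Prod.snd }


section Helpers

variable {α β γ : Type} [Fintype α]

lemma dist_nonneg' {p : α → ℝ} (hp : ∀ a, 0 ≤ p a) (f : α → β) (b : β) :
    0 ≤ dist p f b :=
  Finset.sum_nonneg fun a _ => by by_cases h : f a = b <;> simp [h, hp a]

lemma le_dist {p : α → ℝ} (hp : ∀ a, 0 ≤ p a) (f : α → β) (a : α) :
    p a ≤ dist p f (f a) := by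
  have := Finset.single_le_sum (f := fun a' => if f a' = f a then p a' else 0)
    (fun a' _ => by by_cases h : f a' = f a <;> simp [h, hp a']) (Finset.mem_univ a)
  simpa [dist] using this

lemma dist_pull [Fintype β] (p : α → ℝ) (f : α → β) (F : β → ℝ) :
    ∑ b, dist p f b * F b = ∑ a, p a * F (f a) := by
  unfold dist
  simp_rw [Finset.sum_mul, ite_mul, zero_mul]
  rw [Finset.sum_comm]
  refine Finset.sum_congr rfl fun a _ => ?_
  simpa using Finset.sum_ite_eq Finset.univ (f a) (fun b => p a * F b)

lemma sum_dist [Fintype β] (p : α → ℝ) (f : α → β) : ∑ b, dist p f b = ∑ a, p a := by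
  simpa using dist_pull p f (fun _ => 1)

lemma H_pull [Fintype β] (p : α → ℝ) (f : α → β) :
    H p f = -∑ a, p a * Real.logb 2 (dist p f (f a)) := by
  unfold H
  rw [← dist_pull p f (fun b => Real.logb 2 (dist p f b))]
  simp [Finset.sum_neg_distrib]

lemma dist_comp_le {p : α → ℝ} (hp : ∀ a, 0 ≤ p a) (f : α → β) (π : β → γ) (b : β) :
    dist p f b ≤ dist p (fun a => π (f a)) (π b) := by
  refine Finset.sum_le_sum fun a _ => ?_
  by_cases h : f a = b
  · simp [h]
  · by_cases h2 : π (f a) = π b <;> simp [h, h2, hp a]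

lemma H_congr_dist {α' : Type} [Fintype α'] [Fintype β] {p : α → ℝ} {p' : α' → ℝ}
    {f : α → β} {f' : α' → β} (h : ∀ b, dist p f b = dist p' f' b) :
    H p f = H p' f' := by
  unfold H
  exact Finset.sum_congr rfl fun b _ => by rw [h]

lemma gibbs {ι : Type} [Fintype ι] (a b : ι → ℝ)
    (ha : ∀ i, 0 ≤ a i) (hb : ∀ i, 0 ≤ b i)
    (hab : ∀ i, a i ≠ 0 → b i ≠ 0)
    (hsum : ∑ i, b i ≤ ∑ i, a i) :
    ∑ i, a i * (Real.logb 2 (b i) - Real.logb 2 (a i)) ≤ 0 := by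
  have log2 : (0:ℝ) < Real.log 2 := Real.log_pos one_lt_two
  have key : ∀ i, a i * (Real.logb 2 (b i) - Real.logb 2 (a i)) ≤ (b i - a i) / Real.log 2 := by
    intro i
    rcases (ha i).eq_or_lt with h0 | h0
    · rw [← h0]
      simp only [zero_mul, sub_zero]
      exact div_nonneg (hb i) log2.le
    · have hbpos : 0 < b i := (hb i).lt_of_ne' (hab i h0.ne')
      have h1 : Real.logb 2 (b i) - Real.logb 2 (a i) = Real.log (b i / a i) / Real.log 2 := by
        rw [Real.log_div hbpos.ne' h0.ne']
        simp [Real.logb]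
        ring
      have h2 : Real.log (b i / a i) ≤ b i / a i - 1 :=
        Real.log_le_sub_one_of_pos (by positivity)
      have h3 : a i * Real.log (b i / a i) ≤ b i - a i := by
        have h4 := mul_le_mul_of_nonneg_left h2 h0.le
        have h5 : a i * (b i / a i) = b i := by field_simp
        nlinarith [h4]
      rw [h1, ← mul_div_assoc]
      gcongr
  calc ∑ i, a i * (Real.logb 2 (b i) - Real.logb 2 (a i))
      ≤ ∑ i, (b i - a i) / Real.log 2 := Finset.sum_le_sum fun i _ => key i
    _ = (∑ i, b i - ∑ i, a i) / Real.log 2 := by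
        rw [← Finset.sum_div, Finset.sum_sub_distrib]
    _ ≤ 0 := div_nonpos_of_nonpos_of_nonneg (by linarith) log2.le

end Helpers

section Helpers2

variable {α β γ : Type} [Fintype α]

lemma H_coarsen [Fintype β] [Fintype γ] {p : α → ℝ} (hp : ∀ a, 0 ≤ p a)
    (f : α → β) (π : β → γ) : H p (fun a => π (f a)) ≤ H p f := by
  rw [H_pull, H_pull]
  apply neg_le_neg
  refine Finset.sum_le_sum fun a _ => ?_
  rcases (hp a).eq_or_lt with h | h
  · rw [← h]; simp
  · refine mul_le_mul_of_nonneg_left ?_ h.le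
    have h1 : p a ≤ dist p f (f a) := le_dist hp f a
    exact Real.logb_le_logb_of_le one_lt_two (by linarith) (dist_comp_le hp f π (f a))

lemma Hpair_le [Fintype β] [Fintype γ] {p : α → ℝ} (hp : IsPMF p)
    (f : α → β) (g : α → γ) : H p (fun a => (f a, g a)) ≤ H p f + H p g := by
  have hp0 := hp.1
  set dfg := dist p (fun a => (f a, g a)) with hdfg
  have hf : -∑ z : β × γ, dfg z * Real.logb 2 (dist p f z.1) = H p f := by
    rw [hdfg, dist_pull p _ (fun z : β × γ => Real.logb 2 (dist p f z.1)), H_pull]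
  have hg : -∑ z : β × γ, dfg z * Real.logb 2 (dist p g z.2) = H p g := by
    rw [hdfg, dist_pull p _ (fun z : β × γ => Real.logb 2 (dist p g z.2)), H_pull]
  have hfg : H p (fun a => (f a, g a)) = -∑ z : β × γ, dfg z * Real.logb 2 (dfg z) := by
    rw [hdfg, dist_pull p _ (fun z : β × γ => Real.logb 2 (dfg z)), H_pull]
  have hle1 : ∀ z : β × γ, dfg z ≤ dist p f z.1 := by
    intro z
    have := dist_comp_le hp0 (fun a => (f a, g a)) Prod.fst z
    simpa using this
  have hle2 : ∀ z : β × γ, dfg z ≤ dist p g z.2 := by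
    intro z
    have := dist_comp_le hp0 (fun a => (f a, g a)) Prod.snd z
    simpa using this
  have key : ∀ z : β × γ,
      dfg z * (Real.logb 2 (dist p f z.1 * dist p g z.2) - Real.logb 2 (dfg z))
      = dfg z * Real.logb 2 (dist p f z.1) + dfg z * Real.logb 2 (dist p g z.2)
        - dfg z * Real.logb 2 (dfg z) := by
    intro z
    rcases eq_or_ne (dfg z) 0 with h | h
    · simp [h]
    · have h1 : 0 < dfg z := (dist_nonneg' hp0 _ _).lt_of_ne' h
      rw [Real.logb_mul (by nlinarith [hle1 z]) (by nlinarith [hle2 z])]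
      ring
  have hsumb : ∑ z : β × γ, dist p f z.1 * dist p g z.2 ≤ ∑ z : β × γ, dfg z := by
    rw [sum_dist, hp.2]
    rw [Fintype.sum_prod_type, ← Finset.sum_mul_sum, sum_dist, sum_dist, hp.2]
    norm_num
  have hgibbs := gibbs dfg (fun z : β × γ => dist p f z.1 * dist p g z.2)
    (fun z => dist_nonneg' hp0 _ _)
    (fun z => mul_nonneg (dist_nonneg' hp0 _ _) (dist_nonneg' hp0 _ _))
    (fun z hz => by
      have h1 : 0 < dfg z := (dist_nonneg' hp0 _ _).lt_of_ne' hz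
      exact (mul_pos (lt_of_lt_of_le h1 (hle1 z)) (lt_of_lt_of_le h1 (hle2 z))).ne')
    hsumb
  simp_rw [key] at hgibbs
  rw [Finset.sum_sub_distrib, Finset.sum_add_distrib] at hgibbs
  rw [hfg]
  linarith [hf, hg]

end Helpers2

section Marginals

variable {X Y U : Type} [Fintype X] [Fintype Y] [Fintype U]

lemma sum_triple (f : X × Y × U → ℝ) : ∑ a, f a = ∑ x, ∑ y, ∑ u, f (x, y, u) := by
  rw [Fintype.sum_prod_type]
  exact Finset.sum_congr rfl fun x _ => by rw [Fintype.sum_prod_type]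

lemma dist_fst_eq (p : X × Y → ℝ) (x : X) : dist p Prod.fst x = ∑ y, p (x, y) := by
  unfold dist
  rw [Fintype.sum_prod_type]
  have h : ∀ x' : X, (∑ y, if (x' : X) = x then p (x', y) else 0)
      = if x' = x then ∑ y, p (x', y) else 0 := by
    intro x'; by_cases hx : x' = x <;> simp [hx]
  simp_rw [h]
  simp

lemma dist_snd_eq (p : X × Y → ℝ) (y : Y) : dist p Prod.snd y = ∑ x, p (x, y) := by
  unfold dist
  rw [Fintype.sum_prod_type]
  simp

lemma dist_cXY_eq (q : X × Y × U → ℝ) (x : X) (y : Y) :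
    dist q cXY (x, y) = ∑ u, q (x, y, u) := by
  unfold dist cXY
  refine (sum_triple _).trans ?_
  simp only [Prod.mk.injEq]
  have h1 : ∀ x' y', (∑ u, if x' = x ∧ y' = y then q (x', y', u) else 0)
      = if x' = x ∧ y' = y then ∑ u, q (x', y', u) else 0 := by
    intro x' y'; by_cases h : x' = x ∧ y' = y <;> simp [h]
  simp_rw [h1]
  have h2 : ∀ x', (∑ y', if x' = x ∧ y' = y then ∑ u, q (x', y', u) else 0)
      = if x' = x then ∑ u, q (x', y, u) else 0 := by
    intro x'; by_cases h : x' = x <;> simp [h]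
  simp_rw [h2]
  simp

lemma dist_cX_eq (q : X × Y × U → ℝ) (x : X) :
    dist q cX x = ∑ y, ∑ u, q (x, y, u) := by
  unfold dist cX
  rw [sum_triple (f := fun a => if a.1 = x then q a else 0)]
  have h2 : ∀ x', (∑ y, ∑ u, if x' = x then q (x', y, u) else 0)
      = if x' = x then ∑ y, ∑ u, q (x', y, u) else 0 := by
    intro x'; by_cases h : x' = x <;> simp [h]
  simp_rw [h2]
  simp

lemma dist_cY_eq (q : X × Y × U → ℝ) (y : Y) :
    dist q cY y = ∑ x, ∑ u, q (x, y, u) := by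
  unfold dist cY
  rw [sum_triple (f := fun a => if a.2.1 = y then q a else 0)]
  have h1 : ∀ x' y', (∑ u, if y' = y then q (x', y', u) else 0)
      = if y' = y then ∑ u, q (x', y', u) else 0 := by
    intro x' y'; by_cases h : y' = y <;> simp [h]
  simp_rw [h1]
  simp

lemma dist_cU_eq (q : X × Y × U → ℝ) (u : U) :
    dist q cU u = ∑ x, ∑ y, q (x, y, u) := by
  unfold dist cU
  rw [sum_triple (f := fun a => if a.2.2 = u then q a else 0)]
  simp

lemma dist_cXU_eq (q : X × Y × U → ℝ) (x : X) (u : U) :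
    dist q (fun a : X × Y × U => (a.1, a.2.2)) (x, u) = ∑ y, q (x, y, u) := by
  unfold dist
  refine (sum_triple _).trans ?_
  simp only [Prod.mk.injEq]
  have h1 : ∀ x' y', (∑ u', if x' = x ∧ u' = u then q (x', y', u') else 0)
      = if x' = x then q (x', y', u) else 0 := by
    intro x' y'; by_cases h : x' = x <;> simp [h]
  simp_rw [h1]
  have h2 : ∀ x', (∑ y', if x' = x then q (x', y', u) else 0)
      = if x' = x then ∑ y', q (x', y', u) else 0 := by
    intro x'; by_cases h : x' = x <;> simp [h]
  simp_rw [h2]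
  simp

lemma dist_cYU_eq (q : X × Y × U → ℝ) (y : Y) (u : U) :
    dist q (fun a : X × Y × U => (a.2.1, a.2.2)) (y, u) = ∑ x, q (x, y, u) := by
  unfold dist
  refine (sum_triple _).trans ?_
  simp only [Prod.mk.injEq]
  have h1 : ∀ x' y', (∑ u', if y' = y ∧ u' = u then q (x', y', u') else 0)
      = if y' = y then q (x', y', u) else 0 := by
    intro x' y'; by_cases h : y' = y <;> simp [h]
  simp_rw [h1]
  have h2 : ∀ x', (∑ y', if y' = y then q (x', y', u) else 0) = q (x', y, u) := by
    intro x'; simp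
  simp_rw [h2]

lemma dist_tripleF_eq (q : X × Y × U → ℝ) (x : X) (y : Y) (u : U) :
    dist q (fun a : X × Y × U => ((a.1, a.2.1), a.2.2)) ((x, y), u) = q (x, y, u) := by
  unfold dist
  refine (sum_triple _).trans ?_
  simp only [Prod.mk.injEq]
  have h1 : ∀ x' y', (∑ u', if (x' = x ∧ y' = y) ∧ u' = u then q (x', y', u') else 0)
      = if x' = x ∧ y' = y then q (x', y', u) else 0 := by
    intro x' y'; by_cases h : x' = x ∧ y' = y <;> simp [h]
  simp_rw [h1]
  have h2 : ∀ x', (∑ y', if x' = x ∧ y' = y then q (x', y', u) else 0)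
      = if x' = x then q (x', y, u) else 0 := by
    intro x'; by_cases h : x' = x <;> simp [h]
  simp_rw [h2]
  simp

variable {p : X × Y → ℝ} {q : X × Y × U → ℝ}

lemma aux_nonneg (hq : IsAux p q) : ∀ a, 0 ≤ q a := hq.1.1

lemma aux_le_p (hq : IsAux p q) (x : X) (y : Y) (u : U) : q (x, y, u) ≤ p (x, y) := by
  rw [← hq.2 x y]
  exact Finset.single_le_sum (f := fun u => q (x, y, u)) (fun u _ => aux_nonneg hq _)
    (Finset.mem_univ u)

lemma aux_dist_cX (hq : IsAux p q) (x : X) : dist q cX x = dist p Prod.fst x := by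
  rw [dist_cX_eq, dist_fst_eq]
  exact Finset.sum_congr rfl fun y _ => hq.2 x y

lemma aux_dist_cY (hq : IsAux p q) (y : Y) : dist q cY y = dist p Prod.snd y := by
  rw [dist_cY_eq, dist_snd_eq]
  exact Finset.sum_congr rfl fun x _ => hq.2 x y

lemma aux_dist_cXY (hq : IsAux p q) (z : X × Y) : dist q cXY z = p z := by
  have := dist_cXY_eq q z.1 z.2
  simp only [Prod.mk.eta] at this ⊢
  rw [this, hq.2 z.1 z.2]

lemma aux_sum_one (hq : IsAux p q) : ∑ u, dist q cU u = 1 := by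
  rw [sum_dist]
  exact hq.1.2

end Marginals

section DeltaRepr

variable {X Y U : Type} [Fintype X] [Fintype Y] [Fintype U]

lemma dist_pairF_eq (p : X × Y → ℝ) (w : X × Y) :
    dist p (fun z : X × Y => (z.1, z.2)) w = p w := by
  simp [dist, Prod.mk.eta]

lemma delta_repr {p : X × Y → ℝ} {q : X × Y × U → ℝ} (hq : IsAux p q) :
    Ic q cX cY cU - I2 p Prod.fst Prod.snd =
      ∑ a : X × Y × U, q a *
        (Real.logb 2 (dist q cU a.2.2) + Real.logb 2 (q a)
          + Real.logb 2 (dist p Prod.fst a.1) + Real.logb 2 (dist p Prod.snd a.2.1)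
          - Real.logb 2 (dist q (fun a : X × Y × U => (a.1, a.2.2)) (a.1, a.2.2))
          - Real.logb 2 (dist q (fun a : X × Y × U => (a.2.1, a.2.2)) (a.2.1, a.2.2))
          - Real.logb 2 (p (a.1, a.2.1))) := by
  have hIc : Ic q cX cY cU = H q (fun a : X × Y × U => (a.1, a.2.2))
      + H q (fun a : X × Y × U => (a.2.1, a.2.2)) - H q cU
      - H q (fun a : X × Y × U => ((a.1, a.2.1), a.2.2)) := by
    simp only [Ic, Hc]
    have e1 : H q (fun a : X × Y × U => (cX a, cU a)) = H q (fun a : X × Y × U => (a.1, a.2.2)) := rfl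
    have e2 : H q (fun a : X × Y × U => (cY a, cU a)) = H q (fun a : X × Y × U => (a.2.1, a.2.2)) := rfl
    have e3 : H q (fun a : X × Y × U => ((fun a : X × Y × U => (cX a, cY a)) a, cU a))
        = H q (fun a : X × Y × U => ((a.1, a.2.1), a.2.2)) := rfl
    rw [e1, e2, e3]
    ring
  have hI2 : I2 p Prod.fst Prod.snd = H p Prod.fst + H p Prod.snd
      - H p (fun z : X × Y => (z.1, z.2)) := rfl
  have h1 : H q (fun a : X × Y × U => (a.1, a.2.2)) =
      -∑ a : X × Y × U, q a * Real.logb 2 (dist q (fun a : X × Y × U => (a.1, a.2.2)) (a.1, a.2.2)) :=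
    H_pull q _
  have h2 : H q (fun a : X × Y × U => (a.2.1, a.2.2)) =
      -∑ a : X × Y × U, q a * Real.logb 2 (dist q (fun a : X × Y × U => (a.2.1, a.2.2)) (a.2.1, a.2.2)) :=
    H_pull q _
  have h3 : H q cU = -∑ a : X × Y × U, q a * Real.logb 2 (dist q cU a.2.2) := H_pull q _
  have h4 : H q (fun a : X × Y × U => ((a.1, a.2.1), a.2.2)) =
      -∑ a : X × Y × U, q a * Real.logb 2 (q a) := by
    have h4a : H q (fun a : X × Y × U => ((a.1, a.2.1), a.2.2)) =
        -∑ a : X × Y × U, q a * Real.logb 2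
          (dist q (fun a : X × Y × U => ((a.1, a.2.1), a.2.2)) ((a.1, a.2.1), a.2.2)) :=
      H_pull q _
    rw [h4a]
    congr 1
    refine Finset.sum_congr rfl fun a _ => ?_
    have := dist_tripleF_eq q a.1 a.2.1 a.2.2
    simp only [Prod.mk.eta] at this
    rw [this]
  have hlift : ∀ G : X × Y → ℝ,
      ∑ z : X × Y, p z * G z = ∑ a : X × Y × U, q a * G (a.1, a.2.1) := by
    intro G
    have hr : ∑ a : X × Y × U, q a * G (a.1, a.2.1)
        = ∑ x, ∑ y, ∑ u, q (x, y, u) * G (x, y) := sum_triple _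
    rw [hr, Fintype.sum_prod_type]
    refine Finset.sum_congr rfl fun x _ => Finset.sum_congr rfl fun y _ => ?_
    rw [← Finset.sum_mul, hq.2 x y]
  have h5 : H p Prod.fst = -∑ a : X × Y × U, q a * Real.logb 2 (dist p Prod.fst a.1) := by
    have := H_pull p (Prod.fst : X × Y → X)
    rw [this]
    rw [hlift (fun z => Real.logb 2 (dist p Prod.fst z.1))]
  have h6 : H p Prod.snd = -∑ a : X × Y × U, q a * Real.logb 2 (dist p Prod.snd a.2.1) := by
    have := H_pull p (Prod.snd : X × Y → Y)
    rw [this]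
    rw [hlift (fun z => Real.logb 2 (dist p Prod.snd z.2))]
  have h7 : H p (fun z : X × Y => (z.1, z.2)) =
      -∑ a : X × Y × U, q a * Real.logb 2 (p (a.1, a.2.1)) := by
    have h7a := H_pull p (fun z : X × Y => (z.1, z.2))
    rw [h7a]
    have h7b : ∀ z : X × Y, dist p (fun z : X × Y => (z.1, z.2)) ((z.1, z.2)) = p z := by
      intro z
      rw [dist_pairF_eq]
    have h7c : -∑ z : X × Y, p z * Real.logb 2 (dist p (fun z : X × Y => (z.1, z.2)) ((z.1, z.2)))
        = -∑ z : X × Y, p z * Real.logb 2 (p z) := by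
      congr 1
      exact Finset.sum_congr rfl fun z _ => by rw [h7b]
    rw [h7c, hlift (fun z => Real.logb 2 (p z))]
  have hsplit : ∑ a : X × Y × U, q a *
        (Real.logb 2 (dist q cU a.2.2) + Real.logb 2 (q a)
          + Real.logb 2 (dist p Prod.fst a.1) + Real.logb 2 (dist p Prod.snd a.2.1)
          - Real.logb 2 (dist q (fun a : X × Y × U => (a.1, a.2.2)) (a.1, a.2.2))
          - Real.logb 2 (dist q (fun a : X × Y × U => (a.2.1, a.2.2)) (a.2.1, a.2.2))
          - Real.logb 2 (p (a.1, a.2.1)))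
      = (∑ a : X × Y × U, q a * Real.logb 2 (dist q cU a.2.2))
        + (∑ a : X × Y × U, q a * Real.logb 2 (q a))
        + (∑ a : X × Y × U, q a * Real.logb 2 (dist p Prod.fst a.1))
        + (∑ a : X × Y × U, q a * Real.logb 2 (dist p Prod.snd a.2.1))
        - (∑ a : X × Y × U, q a * Real.logb 2 (dist q (fun a : X × Y × U => (a.1, a.2.2)) (a.1, a.2.2)))
        - (∑ a : X × Y × U, q a * Real.logb 2 (dist q (fun a : X × Y × U => (a.2.1, a.2.2)) (a.2.1, a.2.2)))
        - (∑ a : X × Y × U, q a * Real.logb 2 (p (a.1, a.2.1))) := by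
    rw [← Finset.sum_add_distrib, ← Finset.sum_add_distrib, ← Finset.sum_add_distrib,
      ← Finset.sum_sub_distrib, ← Finset.sum_sub_distrib, ← Finset.sum_sub_distrib]
    exact Finset.sum_congr rfl fun a _ => by ring
  rw [hIc, hI2, hsplit]
  linarith [h1, h2, h3, h4, h5, h6, h7]

end DeltaRepr

section MainLe

variable {X Y U : Type} [Fintype X] [Fintype Y] [Fintype U]

lemma main_le {p : X × Y → ℝ} (hp : IsPMF p)
    (hcond : ∀ x y, p (x, y) ≠ 0 →
      p (x, y) = dist p Prod.snd y ∨ p (x, y) = dist p Prod.fst x)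
    {q : X × Y × U → ℝ} (hq : IsAux p q) :
    Ic q cX cY cU - I2 p Prod.fst Prod.snd ≤ 0 := by
  classical
  have hq0 : ∀ a, 0 ≤ q a := hq.1.1
  have hp0 : ∀ z, 0 ≤ p z := hp.1
  have hq_le_p : ∀ x y u, q (x, y, u) ≤ p (x, y) := fun x y u => aux_le_p hq x y u
  rw [delta_repr hq]
  set dU := dist q cU with hdU
  set dXU := dist q (fun a : X × Y × U => (a.1, a.2.2)) with hdXU
  set dYU := dist q (fun a : X × Y × U => (a.2.1, a.2.2)) with hdYU
  set dF := dist p (Prod.fst : X × Y → X) with hdF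
  set dS := dist p (Prod.snd : X × Y → Y) with hdS
  -- nonnegativity of the various distributions
  have hU0 : ∀ u, 0 ≤ dU u := by rw [hdU]; exact fun u => dist_nonneg' hq0 _ _
  have hXU0 : ∀ z, 0 ≤ dXU z := by rw [hdXU]; exact fun z => dist_nonneg' hq0 _ _
  have hYU0 : ∀ z, 0 ≤ dYU z := by rw [hdYU]; exact fun z => dist_nonneg' hq0 _ _
  have hF0 : ∀ x, 0 ≤ dF x := by rw [hdF]; exact fun x => dist_nonneg' hp0 _ _
  have hS0 : ∀ y, 0 ≤ dS y := by rw [hdS]; exact fun y => dist_nonneg' hp0 _ _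
  -- pointwise marginal inequalities
  have hle_dU : ∀ x u, dXU (x, u) ≤ dU u := by
    rw [hdXU, hdU]
    exact fun x u => dist_comp_le hq0 (fun a : X × Y × U => (a.1, a.2.2)) Prod.snd (x, u)
  have hle_dUY : ∀ y u, dYU (y, u) ≤ dU u := by
    rw [hdYU, hdU]
    exact fun y u => dist_comp_le hq0 (fun a : X × Y × U => (a.2.1, a.2.2)) Prod.snd (y, u)
  have hle_dF : ∀ x u, dXU (x, u) ≤ dF x := by
    intro x u
    have h1 : dist q (fun a : X × Y × U => (a.1, a.2.2)) (x, u) ≤ dist q cX x :=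
      dist_comp_le hq0 (fun a : X × Y × U => (a.1, a.2.2)) Prod.fst (x, u)
    rw [aux_dist_cX hq x] at h1
    rw [hdXU, hdF]
    exact h1
  have hle_dS : ∀ y u, dYU (y, u) ≤ dS y := by
    intro y u
    have h1 : dist q (fun a : X × Y × U => (a.2.1, a.2.2)) (y, u) ≤ dist q cY y :=
      dist_comp_le hq0 (fun a : X × Y × U => (a.2.1, a.2.2)) Prod.fst (y, u)
    rw [aux_dist_cY hq y] at h1
    rw [hdYU, hdS]
    exact h1
  have two_le : ∀ (x : X) (y y' : Y), y ≠ y' → p (x, y) + p (x, y') ≤ dF x := by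
    intro x y y' hne
    rw [hdF, dist_fst_eq]
    calc p (x, y) + p (x, y') = ∑ t ∈ ({y, y'} : Finset Y), p (x, t) := by
          rw [Finset.sum_pair hne]
      _ ≤ ∑ t, p (x, t) := Finset.sum_le_sum_of_subset_of_nonneg
          (Finset.subset_univ _) (fun t _ _ => hp0 _)
  have two_le_S : ∀ (y : Y) (x x' : X), x ≠ x' → p (x, y) + p (x', y) ≤ dS y := by
    intro y x x' hne
    rw [hdS, dist_snd_eq]
    calc p (x, y) + p (x', y) = ∑ t ∈ ({x, x'} : Finset X), p (t, y) := by
          rw [Finset.sum_pair hne]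
      _ ≤ ∑ t, p (t, y) := Finset.sum_le_sum_of_subset_of_nonneg
          (Finset.subset_univ _) (fun t _ _ => hp0 _)
  have hqz : ∀ x y u, p (x, y) = 0 → q (x, y, u) = 0 := by
    intro x y u hz
    exact le_antisymm (hz ▸ hq_le_p x y u) (hq0 _)
  -- key structural facts
  have key_q : ∀ x y u, p (x, y) ≠ 0 → p (x, y) = dS y → dYU (y, u) = q (x, y, u) := by
    intro x y u hpne hex
    rw [hdYU, dist_cYU_eq]
    refine Finset.sum_eq_single_of_mem x (Finset.mem_univ x) ?_
    intro x' _ hx'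
    refine hqz x' y u ?_
    have h2 := two_le_S y x x' (Ne.symm hx')
    have h3 := hp0 (x', y)
    linarith [hex.symm.le]
  have key_qX : ∀ x y u, p (x, y) ≠ 0 → p (x, y) = dF x → dXU (x, u) = q (x, y, u) := by
    intro x y u hpne hex
    rw [hdXU, dist_cXU_eq]
    refine Finset.sum_eq_single_of_mem y (Finset.mem_univ y) ?_
    intro y' _ hy'
    refine hqz x y' u ?_
    have h2 := two_le x y y' (Ne.symm hy')
    have h3 := hp0 (x, y')
    linarith [hex.symm.le]
  -- per-term rewriting
  have hterm : ∀ x y u, q (x, y, u) *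
      (Real.logb 2 (dU u) + Real.logb 2 (q (x, y, u))
        + Real.logb 2 (dF x) + Real.logb 2 (dS y)
        - Real.logb 2 (dXU (x, u)) - Real.logb 2 (dYU (y, u))
        - Real.logb 2 (p (x, y)))
      = (if p (x, y) = dS y
          then q (x, y, u) * (Real.logb 2 (dU u) + Real.logb 2 (dF x) - Real.logb 2 (dXU (x, u)))
          else q (x, y, u) * (Real.logb 2 (dU u) + Real.logb 2 (dS y) - Real.logb 2 (dYU (y, u)))) := by
    intro x y u
    rcases eq_or_ne (q (x, y, u)) 0 with h | h
    · rw [h]; simp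
    · have hpne : p (x, y) ≠ 0 := fun hz => h (hqz x y u hz)
      by_cases hex : p (x, y) = dS y
      · rw [if_pos hex, key_q x y u hpne hex, ← hex]
        ring
      · have hey : p (x, y) = dF x := (hcond x y hpne).resolve_left hex
        rw [if_neg hex, key_qX x y u hpne hey, ← hey]
        ring
  -- dichotomies
  have dichX : ∀ x, (∀ u, (∑ y, if p (x, y) = dS y then q (x, y, u) else 0) = dXU (x, u))
      ∨ (∀ u, (∑ y, if p (x, y) = dS y then q (x, y, u) else 0) = 0) := by
    intro x
    by_cases hx : ∃ y, p (x, y) ≠ 0 ∧ p (x, y) = dS y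
    · left
      intro u
      obtain ⟨y0, hy0, hEXy0⟩ := hx
      rw [hdXU, dist_cXU_eq]
      refine Finset.sum_congr rfl fun y _ => ?_
      by_cases hEXy : p (x, y) = dS y
      · rw [if_pos hEXy]
      · rw [if_neg hEXy]
        by_cases hpz : p (x, y) = 0
        · rw [hqz x y u hpz]
        · exfalso
          have hEY : p (x, y) = dF x := (hcond x y hpz).resolve_left hEXy
          have hyne : y ≠ y0 := fun hh => hEXy (hh ▸ hEXy0)
          have h2 := two_le x y y0 hyne
          have hpos : 0 < p (x, y0) := (hp0 _).lt_of_ne' hy0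
          linarith
    · right
      intro u
      refine Finset.sum_eq_zero fun y _ => ?_
      by_cases hEXy : p (x, y) = dS y
      · rw [if_pos hEXy]
        refine hqz x y u ?_
        by_contra hpz
        exact hx ⟨y, hpz, hEXy⟩
      · rw [if_neg hEXy]
  have dichY : ∀ y, (∀ u, (∑ x, if p (x, y) = dS y then 0 else q (x, y, u)) = dYU (y, u))
      ∨ (∀ u, (∑ x, if p (x, y) = dS y then 0 else q (x, y, u)) = 0) := by
    intro y
    by_cases hy : ∃ x, p (x, y) ≠ 0 ∧ ¬ p (x, y) = dS y
    · left
      intro u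
      obtain ⟨x0, hx0, hEXx0⟩ := hy
      rw [hdYU, dist_cYU_eq]
      refine Finset.sum_congr rfl fun x _ => ?_
      by_cases hEXx : p (x, y) = dS y
      · rw [if_pos hEXx]
        by_cases hpz : p (x, y) = 0
        · rw [hqz x y u hpz]
        · exfalso
          have hxne : x0 ≠ x := fun hh => hEXx0 (hh ▸ hEXx)
          have h2 := two_le_S y x0 x hxne
          have hpos : 0 < p (x0, y) := (hp0 _).lt_of_ne' hx0
          linarith [hEXx.symm.le]
      · rw [if_neg hEXx]
    · right
      intro y'
      refine Finset.sum_eq_zero fun x _ => ?_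
      by_cases hEXx : p (x, y) = dS y
      · rw [if_pos hEXx]
      · rw [if_neg hEXx]
        refine hqz x y y' ?_
        by_contra hpz
        exact hy ⟨x, hpz, hEXx⟩
  -- per-x Gibbs bound
  have gibbsX : ∀ x : X, (∑ u, dXU (x, u) *
      (Real.logb 2 (dU u) + Real.logb 2 (dF x) - Real.logb 2 (dXU (x, u)))) ≤ 0 := by
    intro x
    have hconv : ∀ u, dXU (x, u) *
        (Real.logb 2 (dU u) + Real.logb 2 (dF x) - Real.logb 2 (dXU (x, u)))
        = dXU (x, u) * (Real.logb 2 (dU u * dF x) - Real.logb 2 (dXU (x, u))) := by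
      intro u
      rcases eq_or_ne (dXU (x, u)) 0 with h | h
      · rw [h]; ring
      · have h1 : 0 < dXU (x, u) := (hXU0 _).lt_of_ne' h
        rw [Real.logb_mul (by linarith [hle_dU x u]) (by linarith [hle_dF x u])]
    have hsa : ∑ u, dXU (x, u) = dF x := by
      have h1 : ∀ u, dXU (x, u) = ∑ y, q (x, y, u) := fun u => by rw [hdXU, dist_cXU_eq]
      simp_rw [h1]
      rw [Finset.sum_comm, hdF, dist_fst_eq]
      exact Finset.sum_congr rfl fun y _ => hq.2 x y
    have hsb : ∑ u, dU u * dF x = dF x := by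
      rw [← Finset.sum_mul, hdU, aux_sum_one hq, one_mul]
    calc (∑ u, dXU (x, u) *
          (Real.logb 2 (dU u) + Real.logb 2 (dF x) - Real.logb 2 (dXU (x, u))))
        = ∑ u, dXU (x, u) * (Real.logb 2 (dU u * dF x) - Real.logb 2 (dXU (x, u))) :=
          Finset.sum_congr rfl fun u _ => hconv u
      _ ≤ 0 := by
          refine gibbs _ _ (fun u => hXU0 _)
            (fun u => mul_nonneg (hU0 _) (hF0 _)) (fun u hu => ?_) (by rw [hsa, hsb])
          have h1 : 0 < dXU (x, u) := (hXU0 _).lt_of_ne' hu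
          exact (mul_pos (lt_of_lt_of_le h1 (hle_dU x u)) (lt_of_lt_of_le h1 (hle_dF x u))).ne'
  have gibbsY : ∀ y : Y, (∑ u, dYU (y, u) *
      (Real.logb 2 (dU u) + Real.logb 2 (dS y) - Real.logb 2 (dYU (y, u)))) ≤ 0 := by
    intro y
    have hconv : ∀ u, dYU (y, u) *
        (Real.logb 2 (dU u) + Real.logb 2 (dS y) - Real.logb 2 (dYU (y, u)))
        = dYU (y, u) * (Real.logb 2 (dU u * dS y) - Real.logb 2 (dYU (y, u))) := by
      intro u
      rcases eq_or_ne (dYU (y, u)) 0 with h | h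
      · rw [h]; ring
      · have h1 : 0 < dYU (y, u) := (hYU0 _).lt_of_ne' h
        rw [Real.logb_mul (by linarith [hle_dUY y u]) (by linarith [hle_dS y u])]
    have hsa : ∑ u, dYU (y, u) = dS y := by
      have h1 : ∀ u, dYU (y, u) = ∑ x, q (x, y, u) := fun u => by rw [hdYU, dist_cYU_eq]
      simp_rw [h1]
      rw [Finset.sum_comm, hdS, dist_snd_eq]
      exact Finset.sum_congr rfl fun x _ => hq.2 x y
    have hsb : ∑ u, dU u * dS y = dS y := by
      rw [← Finset.sum_mul, hdU, aux_sum_one hq, one_mul]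
    calc (∑ u, dYU (y, u) *
          (Real.logb 2 (dU u) + Real.logb 2 (dS y) - Real.logb 2 (dYU (y, u))))
        = ∑ u, dYU (y, u) * (Real.logb 2 (dU u * dS y) - Real.logb 2 (dYU (y, u))) :=
          Finset.sum_congr rfl fun u _ => hconv u
      _ ≤ 0 := by
          refine gibbs _ _ (fun u => hYU0 _)
            (fun u => mul_nonneg (hU0 _) (hS0 _)) (fun u hu => ?_) (by rw [hsa, hsb])
          have h1 : 0 < dYU (y, u) := (hYU0 _).lt_of_ne' hu
          exact (mul_pos (lt_of_lt_of_le h1 (hle_dUY y u)) (lt_of_lt_of_le h1 (hle_dS y u))).ne'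
  -- assemble
  have step1 : (∑ a : X × Y × U, q a *
      (Real.logb 2 (dU a.2.2) + Real.logb 2 (q a)
        + Real.logb 2 (dF a.1) + Real.logb 2 (dS a.2.1)
        - Real.logb 2 (dXU (a.1, a.2.2)) - Real.logb 2 (dYU (a.2.1, a.2.2))
        - Real.logb 2 (p (a.1, a.2.1))))
      = ∑ x, ∑ y, ∑ u,
        ((if p (x, y) = dS y then q (x, y, u) else 0) *
            (Real.logb 2 (dU u) + Real.logb 2 (dF x) - Real.logb 2 (dXU (x, u)))
          + (if p (x, y) = dS y then 0 else q (x, y, u)) *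
            (Real.logb 2 (dU u) + Real.logb 2 (dS y) - Real.logb 2 (dYU (y, u)))) := by
    refine (sum_triple _).trans ?_
    refine Finset.sum_congr rfl fun x _ => Finset.sum_congr rfl fun y _ =>
      Finset.sum_congr rfl fun u _ => ?_
    rw [hterm x y u]
    by_cases hex : p (x, y) = dS y
    · rw [if_pos hex, if_pos hex, if_pos hex]
      ring
    · rw [if_neg hex, if_neg hex, if_neg hex]
      ring
  rw [step1]
  have step2 : ∀ x, ∑ y, ∑ u,
      ((if p (x, y) = dS y then q (x, y, u) else 0) *
          (Real.logb 2 (dU u) + Real.logb 2 (dF x) - Real.logb 2 (dXU (x, u)))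
        + (if p (x, y) = dS y then 0 else q (x, y, u)) *
          (Real.logb 2 (dU u) + Real.logb 2 (dS y) - Real.logb 2 (dYU (y, u))))
      = (∑ u, (∑ y, if p (x, y) = dS y then q (x, y, u) else 0) *
          (Real.logb 2 (dU u) + Real.logb 2 (dF x) - Real.logb 2 (dXU (x, u))))
        + ∑ y, ∑ u, (if p (x, y) = dS y then 0 else q (x, y, u)) *
          (Real.logb 2 (dU u) + Real.logb 2 (dS y) - Real.logb 2 (dYU (y, u))) := by
    intro x
    simp_rw [Finset.sum_add_distrib]
    congr 1
    rw [Finset.sum_comm]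
    exact Finset.sum_congr rfl fun u _ => (Finset.sum_mul _ _ _).symm
  calc (∑ x, ∑ y, ∑ u,
        ((if p (x, y) = dS y then q (x, y, u) else 0) *
            (Real.logb 2 (dU u) + Real.logb 2 (dF x) - Real.logb 2 (dXU (x, u)))
          + (if p (x, y) = dS y then 0 else q (x, y, u)) *
            (Real.logb 2 (dU u) + Real.logb 2 (dS y) - Real.logb 2 (dYU (y, u)))))
      = ∑ x, ((∑ u, (∑ y, if p (x, y) = dS y then q (x, y, u) else 0) *
            (Real.logb 2 (dU u) + Real.logb 2 (dF x) - Real.logb 2 (dXU (x, u))))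
          + ∑ y, ∑ u, (if p (x, y) = dS y then 0 else q (x, y, u)) *
            (Real.logb 2 (dU u) + Real.logb 2 (dS y) - Real.logb 2 (dYU (y, u)))) :=
        Finset.sum_congr rfl fun x _ => step2 x
    _ = (∑ x, ∑ u, (∑ y, if p (x, y) = dS y then q (x, y, u) else 0) *
            (Real.logb 2 (dU u) + Real.logb 2 (dF x) - Real.logb 2 (dXU (x, u))))
        + ∑ x, ∑ y, ∑ u, (if p (x, y) = dS y then 0 else q (x, y, u)) *
            (Real.logb 2 (dU u) + Real.logb 2 (dS y) - Real.logb 2 (dYU (y, u))) :=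
        Finset.sum_add_distrib
    _ ≤ 0 := by
        have hXpart : (∑ x, ∑ u, (∑ y, if p (x, y) = dS y then q (x, y, u) else 0) *
            (Real.logb 2 (dU u) + Real.logb 2 (dF x) - Real.logb 2 (dXU (x, u)))) ≤ 0 := by
          refine Finset.sum_nonpos fun x _ => ?_
          rcases dichX x with hx | hx
          · calc (∑ u, (∑ y, if p (x, y) = dS y then q (x, y, u) else 0) *
                  (Real.logb 2 (dU u) + Real.logb 2 (dF x) - Real.logb 2 (dXU (x, u))))
                = ∑ u, dXU (x, u) *
                  (Real.logb 2 (dU u) + Real.logb 2 (dF x) - Real.logb 2 (dXU (x, u))) :=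
                  Finset.sum_congr rfl fun u _ => by rw [hx u]
              _ ≤ 0 := gibbsX x
          · exact (Finset.sum_eq_zero fun u _ => by rw [hx u, zero_mul]).le
        have hYpart : (∑ x, ∑ y, ∑ u, (if p (x, y) = dS y then 0 else q (x, y, u)) *
            (Real.logb 2 (dU u) + Real.logb 2 (dS y) - Real.logb 2 (dYU (y, u)))) ≤ 0 := by
          have e1 : (∑ x, ∑ y, ∑ u, (if p (x, y) = dS y then 0 else q (x, y, u)) *
              (Real.logb 2 (dU u) + Real.logb 2 (dS y) - Real.logb 2 (dYU (y, u))))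
              = ∑ y, ∑ u, (∑ x, if p (x, y) = dS y then 0 else q (x, y, u)) *
                (Real.logb 2 (dU u) + Real.logb 2 (dS y) - Real.logb 2 (dYU (y, u))) := by
            rw [Finset.sum_comm]
            refine Finset.sum_congr rfl fun y _ => ?_
            rw [Finset.sum_comm]
            exact Finset.sum_congr rfl fun u _ => (Finset.sum_mul _ _ _).symm
          rw [e1]
          refine Finset.sum_nonpos fun y _ => ?_
          rcases dichY y with hy | hy
          · calc (∑ u, (∑ x, if p (x, y) = dS y then 0 else q (x, y, u)) *
                  (Real.logb 2 (dU u) + Real.logb 2 (dS y) - Real.logb 2 (dYU (y, u))))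
                = ∑ u, dYU (y, u) *
                  (Real.logb 2 (dU u) + Real.logb 2 (dS y) - Real.logb 2 (dYU (y, u))) :=
                  Finset.sum_congr rfl fun u _ => by rw [hy u]
              _ ≤ 0 := gibbsY y
          · exact (Finset.sum_eq_zero fun u _ => by rw [hy u, zero_mul]).le
        linarith

end MainLe

section KLb

/-- Binary KL-type quantity (base 2): `KL(Ber(1/2+t) ‖ Ber(1/2))`. -/
noncomputable def KLb (t : ℝ) : ℝ :=
  (1/2 + t) * Real.logb 2 (1/2 + t) + (1/2 - t) * Real.logb 2 (1/2 - t) + 1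

lemma klb_even (t : ℝ) : KLb (-t) = KLb t := by
  unfold KLb
  rw [show (1/2 + -t : ℝ) = 1/2 - t by ring, show (1/2 - -t : ℝ) = 1/2 + t by ring]
  ring

lemma klb_repr {t : ℝ} (ht : |t| < 1/2) :
    KLb t = ((1/2 + t) * Real.log (1 + 2*t) + (1/2 - t) * Real.log (1 - 2*t)) / Real.log 2 := by
  have h1 : (0:ℝ) < 1 + 2*t := by rw [abs_lt] at ht; linarith
  have h2 : (0:ℝ) < 1 - 2*t := by rw [abs_lt] at ht; linarith
  have l2 : Real.log 2 ≠ 0 := (Real.log_pos one_lt_two).ne'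
  unfold KLb
  rw [show (1/2 + t : ℝ) = (1 + 2*t)/2 by ring, show (1/2 - t : ℝ) = (1 - 2*t)/2 by ring]
  simp only [Real.logb]
  rw [Real.log_div h1.ne' two_ne_zero, Real.log_div h2.ne' two_ne_zero]
  field_simp
  ring

lemma klb_nonneg {t : ℝ} (ht : |t| < 1/2) : 0 ≤ KLb t := by
  have h1 : (0:ℝ) < 1 + 2*t := by rw [abs_lt] at ht; linarith
  have h2 : (0:ℝ) < 1 - 2*t := by rw [abs_lt] at ht; linarith
  have l2 : (0:ℝ) < Real.log 2 := Real.log_pos one_lt_two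
  rw [klb_repr ht]
  have la : 1 - (1 + 2*t)⁻¹ ≤ Real.log (1 + 2*t) := by
    have := Real.log_le_sub_one_of_pos (show (0:ℝ) < (1 + 2*t)⁻¹ by positivity)
    rw [Real.log_inv] at this
    linarith
  have lb : 1 - (1 - 2*t)⁻¹ ≤ Real.log (1 - 2*t) := by
    have := Real.log_le_sub_one_of_pos (show (0:ℝ) < (1 - 2*t)⁻¹ by positivity)
    rw [Real.log_inv] at this
    linarith
  have m1 : (1/2 + t) * (1 - (1 + 2*t)⁻¹) ≤ (1/2 + t) * Real.log (1 + 2*t) :=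
    mul_le_mul_of_nonneg_left la (by linarith)
  have m2 : (1/2 - t) * (1 - (1 - 2*t)⁻¹) ≤ (1/2 - t) * Real.log (1 - 2*t) :=
    mul_le_mul_of_nonneg_left lb (by linarith)
  have id1 : (1/2 + t) * (1 - (1 + 2*t)⁻¹) = t := by field_simp; ring
  have id2 : (1/2 - t) * (1 - (1 - 2*t)⁻¹) = -t := by field_simp; ring
  have : 0 ≤ (1/2 + t) * Real.log (1 + 2*t) + (1/2 - t) * Real.log (1 - 2*t) := by
    rw [id1] at m1; rw [id2] at m2; linarith
  positivity
  
lemma klb_pos {t : ℝ} (ht0 : 0 < t) (ht : t < 1/2) : 0 < KLb t := by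
  have habs : |t| < 1/2 := by rw [abs_lt]; constructor <;> linarith
  have h1 : (0:ℝ) < 1 + 2*t := by linarith
  have h2 : (0:ℝ) < 1 - 2*t := by linarith
  have l2 : (0:ℝ) < Real.log 2 := Real.log_pos one_lt_two
  rw [klb_repr habs]
  have la : 1 - (1 + 2*t)⁻¹ < Real.log (1 + 2*t) := by
    have := Real.log_lt_sub_one_of_pos (show (0:ℝ) < (1 + 2*t)⁻¹ by positivity)
      (by
        intro hcon
        rw [inv_eq_one] at hcon
        linarith)
    rw [Real.log_inv] at this
    linarith
  have lb : 1 - (1 - 2*t)⁻¹ ≤ Real.log (1 - 2*t) := by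
    have := Real.log_le_sub_one_of_pos (show (0:ℝ) < (1 - 2*t)⁻¹ by positivity)
    rw [Real.log_inv] at this
    linarith
  have m1 : (1/2 + t) * (1 - (1 + 2*t)⁻¹) < (1/2 + t) * Real.log (1 + 2*t) :=
    mul_lt_mul_of_pos_left la (by linarith)
  have m2 : (1/2 - t) * (1 - (1 - 2*t)⁻¹) ≤ (1/2 - t) * Real.log (1 - 2*t) :=
    mul_le_mul_of_nonneg_left lb (by linarith)
  have id1 : (1/2 + t) * (1 - (1 + 2*t)⁻¹) = t := by field_simp; ring
  have id2 : (1/2 - t) * (1 - (1 - 2*t)⁻¹) = -t := by field_simp; ring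
  have hnum : 0 < (1/2 + t) * Real.log (1 + 2*t) + (1/2 - t) * Real.log (1 - 2*t) := by
    rw [id1] at m1; rw [id2] at m2; linarith
  positivity

lemma klb_scale {x l : ℝ} (hx0 : 0 ≤ x) (hx : x < 1/2) (hl0 : 0 ≤ l) (hl1 : l ≤ 1) :
    KLb (l * x) ≤ l * KLb x := by
  have hlxx : l * x ≤ x := by nlinarith
  have hlx0 : 0 ≤ l * x := mul_nonneg hl0 hx0
  have hlx : l * x < 1/2 := lt_of_le_of_lt hlxx hx
  have habs1 : |l * x| < 1/2 := by rw [abs_lt]; constructor <;> linarith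
  have habs2 : |x| < 1/2 := by rw [abs_lt]; constructor <;> linarith
  have lg2 : (0:ℝ) < Real.log 2 := Real.log_pos one_lt_two
  rw [klb_repr habs1, klb_repr habs2, ← mul_div_assoc]
  have hA : (0:ℝ) < 1 + 2*x := by linarith
  have hB : (0:ℝ) < 1 - 2*x := by linarith
  have hA' : (0:ℝ) < 1 + 2*(l*x) := by linarith
  have hB' : (0:ℝ) < 1 - 2*(l*x) := by linarith
  have l1 : Real.log ((1 + 2*(l*x))/(1 + 2*x)) ≤ (1 + 2*(l*x))/(1 + 2*x) - 1 :=
    Real.log_le_sub_one_of_pos (by positivity)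
  have l2' : Real.log ((1 - 2*(l*x))/(1 - 2*x)) ≤ (1 - 2*(l*x))/(1 - 2*x) - 1 :=
    Real.log_le_sub_one_of_pos (by positivity)
  have l3 : Real.log (1 + 2*(l*x)) ≤ 2*(l*x) := by
    have := Real.log_le_sub_one_of_pos hA'; linarith
  have l4 : Real.log (1 - 2*(l*x)) ≤ -(2*(l*x)) := by
    have := Real.log_le_sub_one_of_pos hB'; linarith
  rw [Real.log_div hA'.ne' hA.ne'] at l1
  rw [Real.log_div hB'.ne' hB.ne'] at l2'
  have id1 : (1/2 + x) * ((1 + 2*(l*x))/(1 + 2*x) - 1) = l*x - x := by field_simp; ring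
  have id2 : (1/2 - x) * ((1 - 2*(l*x))/(1 - 2*x) - 1) = x - l*x := by field_simp; ring
  have m1 : (1/2 + x) * (Real.log (1+2*(l*x)) - Real.log (1+2*x)) ≤ l*x - x := by
    rw [← id1]; exact mul_le_mul_of_nonneg_left l1 (by linarith)
  have m2 : (1/2 - x) * (Real.log (1-2*(l*x)) - Real.log (1-2*x)) ≤ x - l*x := by
    rw [← id2]; exact mul_le_mul_of_nonneg_left l2' (by linarith)
  have hmain : (1/2 + l*x) * Real.log (1 + 2*(l*x)) + (1/2 - l*x) * Real.log (1 - 2*(l*x))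
      ≤ l * ((1/2 + x) * Real.log (1 + 2*x) + (1/2 - x) * Real.log (1 - 2*x)) := by
    nlinarith [mul_le_mul_of_nonneg_left m1 hl0, mul_le_mul_of_nonneg_left m2 hl0,
      mul_le_mul_of_nonneg_left l3 (show (0:ℝ) ≤ (1-l)/2 by linarith),
      mul_le_mul_of_nonneg_left l4 (show (0:ℝ) ≤ (1-l)/2 by linarith)]
  gcongr

lemma klb_persp {w W C : ℝ} (hw : 0 < w) (hwW : w ≤ W) (hC : 0 ≤ C) (hlt : C/w < 1/2) :
    W * KLb (C/W) ≤ w * KLb (C/w) := by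
  have hW : 0 < W := lt_of_lt_of_le hw hwW
  have hsc := klb_scale (x := C/w) (l := w/W) (div_nonneg hC hw.le) hlt
    (by positivity) ((div_le_one hW).2 hwW)
  have hx : C/W = (w/W) * (C/w) := by field_simp
  rw [hx]
  calc W * KLb ((w/W) * (C/w)) ≤ W * ((w/W) * KLb (C/w)) :=
        mul_le_mul_of_nonneg_left hsc hW.le
    _ = w * KLb (C/w) := by field_simp

lemma sum_philog {w t : ℝ} (hw : 0 < w) (hlt : |t| < w/2) :
    -((w/2 + t) * Real.logb 2 (w/2 + t)) + -((w/2 - t) * Real.logb 2 (w/2 - t))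
      = -(w * Real.logb 2 w) + w - w * KLb (t/w) := by
  have h1 : (0:ℝ) < w/2 + t := by rw [abs_lt] at hlt; linarith
  have h2 : (0:ℝ) < w/2 - t := by rw [abs_lt] at hlt; linarith
  have e3 : (1/2 + t/w : ℝ) = (w/2 + t)/w := by field_simp <;> ring
  have e4 : (1/2 - t/w : ℝ) = (w/2 - t)/w := by field_simp <;> ring
  have h3 : (0:ℝ) < 1/2 + t/w := by rw [e3]; positivity
  have h4 : (0:ℝ) < 1/2 - t/w := by rw [e4]; positivity
  have e5 : (w/2 + t : ℝ) = w * (1/2 + t/w) := by field_simp <;> ring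
  have e6 : (w/2 - t : ℝ) = w * (1/2 - t/w) := by field_simp <;> ring
  rw [e5, e6, Real.logb_mul hw.ne' h3.ne', Real.logb_mul hw.ne' h4.ne']
  unfold KLb
  ring

lemma half_log {w : ℝ} (hw : 0 ≤ w) :
    -((w/2) * Real.logb 2 (w/2)) + -((w/2) * Real.logb 2 (w/2)) = -(w * Real.logb 2 w) + w := by
  rcases hw.eq_or_lt with h | h
  · rw [← h]; simp
  · rw [show (w/2 : ℝ) = w * (1/2) by ring, Real.logb_mul h.ne' (by norm_num)]
    rw [show (1/2 : ℝ) = 2⁻¹ by norm_num, Real.logb_inv, Real.logb_self_eq_one one_lt_two]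
    ring

end KLb

section IcLe

variable {X Y U : Type} [Fintype X] [Fintype Y] [Fintype U]

lemma Ic_eq (q : X × Y × U → ℝ) : Ic q cX cY cU = H q (fun a : X × Y × U => (a.1, a.2.2))
    + H q (fun a : X × Y × U => (a.2.1, a.2.2)) - H q cU
    - H q (fun a : X × Y × U => ((a.1, a.2.1), a.2.2)) := by
  simp only [Ic, Hc]
  have e1 : H q (fun a : X × Y × U => (cX a, cU a)) = H q (fun a : X × Y × U => (a.1, a.2.2)) := rfl
  have e2 : H q (fun a : X × Y × U => (cY a, cU a)) = H q (fun a : X × Y × U => (a.2.1, a.2.2)) := rfl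
  have e3 : H q (fun a : X × Y × U => ((fun a : X × Y × U => (cX a, cY a)) a, cU a))
      = H q (fun a : X × Y × U => ((a.1, a.2.1), a.2.2)) := rfl
  rw [e1, e2, e3]
  ring

lemma ic_le {p : X × Y → ℝ} (hp : IsPMF p) {q : X × Y × U → ℝ} (hq : IsAux p q) :
    Ic q cX cY cU ≤ H p Prod.fst := by
  have hq0 : ∀ a, 0 ≤ q a := hq.1.1
  have h1 : H q (fun a : X × Y × U => (a.2.1, a.2.2))
      ≤ H q (fun a : X × Y × U => ((a.1, a.2.1), a.2.2)) :=
    H_coarsen hq0 (fun a : X × Y × U => ((a.1, a.2.1), a.2.2)) (fun z => (z.1.2, z.2))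
  have h2 : H q (fun a : X × Y × U => (a.1, a.2.2)) ≤ H q cX + H q cU :=
    Hpair_le hq.1 cX cU
  have h3 : H q cX = H p Prod.fst :=
    H_congr_dist (fun x => aux_dist_cX hq x)
  have h4 := Ic_eq q
  linarith

end IcLe

section Construction

variable {X Y : Type} [Fintype X] [Fintype Y]

set_option maxHeartbeats 2000000 in
lemma exists_pos_delta (p : X × Y → ℝ) (hp : IsPMF p)
    (x0 : X) (y0 : Y) (hpos : 0 < p (x0, y0))
    (hne1 : p (x0, y0) ≠ dist p Prod.snd y0) (hne2 : p (x0, y0) ≠ dist p Prod.fst x0) :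
    ∃ q : X × Y × Bool → ℝ, IsAux p q ∧ 0 < Ic q cX cY cU - I2 p Prod.fst Prod.snd := by
  classical
  have hp0 := hp.1
  -- find the second point in the column y0
  have hle1 : p (x0, y0) ≤ dist p Prod.snd y0 := by
    rw [dist_snd_eq]
    exact Finset.single_le_sum (f := fun x => p (x, y0)) (fun x _ => hp0 _) (Finset.mem_univ x0)
  have hlt1 : p (x0, y0) < dist p Prod.snd y0 := hle1.lt_of_ne hne1
  obtain ⟨x1, hx1ne, hbpos⟩ : ∃ x1, x1 ≠ x0 ∧ 0 < p (x1, y0) := by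
    by_contra hcon
    push_neg at hcon
    have : dist p Prod.snd y0 = p (x0, y0) := by
      rw [dist_snd_eq]
      refine Finset.sum_eq_single_of_mem x0 (Finset.mem_univ x0) ?_
      intro x _ hx
      exact le_antisymm (hcon x hx) (hp0 _)
    linarith
  -- find the second point in the row x0
  have hle2 : p (x0, y0) ≤ dist p Prod.fst x0 := by
    rw [dist_fst_eq]
    exact Finset.single_le_sum (f := fun y => p (x0, y)) (fun y _ => hp0 _) (Finset.mem_univ y0)
  have hlt2 : p (x0, y0) < dist p Prod.fst x0 := hle2.lt_of_ne hne2
  obtain ⟨y1, hy1ne, hcpos⟩ : ∃ y1, y1 ≠ y0 ∧ 0 < p (x0, y1) := by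
    by_contra hcon
    push_neg at hcon
    have : dist p Prod.fst x0 = p (x0, y0) := by
      rw [dist_fst_eq]
      refine Finset.sum_eq_single_of_mem y0 (Finset.mem_univ y0) ?_
      intro y _ hy
      exact le_antisymm (hcon y hy) (hp0 _)
    linarith
  have d1 : ((x0, y0) : X × Y) ≠ (x0, y1) := fun h => hy1ne (congrArg Prod.snd h).symm
  have d2 : ((x0, y0) : X × Y) ≠ (x1, y0) := fun h => hx1ne (congrArg Prod.fst h).symm
  have d3 : ((x0, y1) : X × Y) ≠ (x1, y0) := fun h => hx1ne (congrArg Prod.fst h).symm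
  have ha1 : p (x0, y0) ≤ 1 := by
    rw [← hp.2]
    exact Finset.single_le_sum (f := fun z => p z) (fun z _ => hp0 _) (Finset.mem_univ (x0, y0))
  -- the perturbation
  set R : ℝ := max 1 (max (p (x0, y0) / p (x1, y0)) (p (x0, y0) / p (x0, y1))) with hRdef
  have hRpos : (0:ℝ) < R := lt_of_lt_of_le one_pos (le_max_left _ _)
  have hR1 : (1:ℝ) ≤ R := le_max_left _ _
  have hRb : p (x0, y0) / p (x1, y0) ≤ R := le_trans (le_max_left _ _) (le_max_right _ _)
  have hRc : p (x0, y0) / p (x0, y1) ≤ R := le_trans (le_max_right _ _) (le_max_right _ _)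
  set ε : ℝ := 1 / (4 * R) with hεdef
  have hεpos : 0 < ε := by rw [hεdef]; positivity
  have hε14 : ε ≤ 1/4 := by
    rw [hεdef, div_le_div_iff₀ (by linarith) (by norm_num)]
    linarith
  have hεa14 : ε * p (x0, y0) ≤ 1/4 := by
    calc ε * p (x0, y0) ≤ 1/4 * 1 := mul_le_mul hε14 ha1 hpos.le (by norm_num)
      _ = 1/4 := by norm_num
  have hεab : ε * p (x0, y0) ≤ p (x1, y0) / 4 := by
    have h1 : p (x0, y0) ≤ R * p (x1, y0) := (div_le_iff₀ hbpos).1 hRb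
    rw [hεdef]
    rw [div_mul_eq_mul_div, div_le_div_iff₀ (by linarith) (by norm_num)]
    linarith only [h1]
  have hεac : ε * p (x0, y0) ≤ p (x0, y1) / 4 := by
    have h1 : p (x0, y0) ≤ R * p (x0, y1) := (div_le_iff₀ hcpos).1 hRc
    rw [hεdef]
    rw [div_mul_eq_mul_div, div_le_div_iff₀ (by linarith) (by norm_num)]
    linarith only [h1]
  set e : X × Y → ℝ := fun z =>
    if z = (x0, y0) then 1
    else if z = (x0, y1) then -(p (x0, y0) / p (x0, y1))
    else if z = (x1, y0) then -(p (x0, y0) / p (x1, y0))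
    else 0 with he
  have ve1 : e (x0, y0) = 1 := by simp [he]
  have ve2 : e (x0, y1) = -(p (x0, y0) / p (x0, y1)) := by
    simp [he, hy1ne, hx1ne]
  have ve3 : e (x1, y0) = -(p (x0, y0) / p (x1, y0)) := by
    simp [he, hy1ne, hx1ne]
  have ve0 : ∀ z, z ≠ (x0, y0) → z ≠ (x0, y1) → z ≠ (x1, y0) → e z = 0 := by
    intro z h1 h2 h3
    simp [he, h1, h2, h3]
  have habs_e : ∀ z, |e z| ≤ R := by
    intro z
    simp only [he]
    split_ifs with h1 h2 h3
    · rw [abs_one]; exact hR1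
    · rw [abs_neg, abs_of_nonneg (div_nonneg hpos.le hcpos.le)]; exact hRc
    · rw [abs_neg, abs_of_nonneg (div_nonneg hpos.le hbpos.le)]; exact hRb
    · rw [abs_zero]; linarith
  have habs : ∀ z, |ε * e z| ≤ 1/4 := by
    intro z
    rw [abs_mul, abs_of_pos hεpos]
    calc ε * |e z| ≤ ε * R := mul_le_mul_of_nonneg_left (habs_e z) hεpos.le
      _ = 1/4 := by rw [hεdef]; field_simp
  -- the auxiliary joint distribution
  set q : X × Y × Bool → ℝ := fun z =>
    p (z.1, z.2.1) * (1/2 + ε * (cond z.2.2 1 (-1)) * e (z.1, z.2.1)) with hqdef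
  have hfac_t : ∀ x y, q (x, y, true) = p (x, y) * (1/2 + ε * e (x, y)) := by
    intro x y
    rw [hqdef]
    show p (x, y) * (1/2 + ε * 1 * e (x, y)) = p (x, y) * (1/2 + ε * e (x, y))
    ring
  have hfac_f : ∀ x y, q (x, y, false) = p (x, y) * (1/2 - ε * e (x, y)) := by
    intro x y
    rw [hqdef]
    show p (x, y) * (1/2 + ε * (-1) * e (x, y)) = p (x, y) * (1/2 - ε * e (x, y))
    ring
  have hrpos_t : ∀ x y, (0:ℝ) < 1/2 + ε * e (x, y) := by
    intro x y
    have := habs (x, y)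
    rw [abs_le] at this
    linarith [this.1]
  have hrpos_f : ∀ x y, (0:ℝ) < 1/2 - ε * e (x, y) := by
    intro x y
    have := habs (x, y)
    rw [abs_le] at this
    linarith [this.2]
  have hq_nonneg : ∀ z, 0 ≤ q z := by
    intro z
    rcases z with ⟨x, y, u⟩
    cases u
    · rw [hfac_f]
      exact mul_nonneg (hp0 _) (hrpos_f x y).le
    · rw [hfac_t]
      exact mul_nonneg (hp0 _) (hrpos_t x y).le
  have hsum_u : ∀ x y, (∑ u : Bool, q (x, y, u)) = p (x, y) := by
    intro x y
    rw [Fintype.sum_bool, hfac_t, hfac_f]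
    ring
  have hq_total : ∑ z : X × Y × Bool, q z = 1 := by
    rw [sum_triple q]
    simp_rw [hsum_u]
    have h2 : (∑ x, ∑ y, p (x, y)) = ∑ z : X × Y, p z := (Fintype.sum_prod_type _).symm
    rw [h2, ← hp.2]
  have hqaux : IsAux p q := ⟨⟨hq_nonneg, hq_total⟩, hsum_u⟩
  refine ⟨q, hqaux, ?_⟩
  -- distinctness facts for the three support cells
  have hnot1 : ((x0, y0) : X × Y) ∉ ({(x0, y1), (x1, y0)} : Finset (X × Y)) := by
    simp [d1, d2]
  have hnot2 : ((x0, y1) : X × Y) ∉ ({(x1, y0)} : Finset (X × Y)) := by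
    simp [d3]
  have hcc : p (x0, y0) / p (x0, y1) * p (x0, y1) = p (x0, y0) := div_mul_cancel₀ _ hcpos.ne'
  have hbb : p (x0, y0) / p (x1, y0) * p (x1, y0) = p (x0, y0) := div_mul_cancel₀ _ hbpos.ne'
  -- total weighted sum of e
  have hebar : ∑ z : X × Y, p z * e z = -p (x0, y0) := by
    have hvan : ∀ z ∈ (Finset.univ : Finset (X × Y)),
        z ∉ ({(x0, y0), (x0, y1), (x1, y0)} : Finset (X × Y)) → p z * e z = 0 := by
      intro z _ hz
      simp only [Finset.mem_insert, Finset.mem_singleton, not_or] at hz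
      rw [ve0 z hz.1 hz.2.1 hz.2.2, mul_zero]
    calc ∑ z : X × Y, p z * e z
        = ∑ z ∈ ({(x0, y0), (x0, y1), (x1, y0)} : Finset (X × Y)), p z * e z :=
          (Finset.sum_subset (Finset.subset_univ _) hvan).symm
      _ = p (x0, y0) * e (x0, y0) + (p (x0, y1) * e (x0, y1) + p (x1, y0) * e (x1, y0)) := by
          rw [Finset.sum_insert hnot1, Finset.sum_insert hnot2, Finset.sum_singleton]
      _ = -p (x0, y0) := by
          rw [ve1, ve2, ve3]
          linear_combination (-1 : ℝ) * hcc + (-1 : ℝ) * hbb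
  -- row sums of p·e
  have hnX : ∀ x, (∑ y, p (x, y) * e (x, y)) = (if x = x1 then -p (x0, y0) else 0) := by
    intro x
    by_cases hx0' : x = x0
    · rw [hx0']
      rw [if_neg (Ne.symm hx1ne)]
      have hvan : ∀ y ∈ (Finset.univ : Finset Y), y ∉ ({y0, y1} : Finset Y) →
          p (x0, y) * e (x0, y) = 0 := by
        intro y _ hy
        simp only [Finset.mem_insert, Finset.mem_singleton, not_or] at hy
        rw [ve0 (x0, y) (fun h => hy.1 (congrArg Prod.snd h))
          (fun h => hy.2 (congrArg Prod.snd h))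
          (fun h => hx1ne (congrArg Prod.fst h).symm), mul_zero]
      calc ∑ y, p (x0, y) * e (x0, y)
          = ∑ y ∈ ({y0, y1} : Finset Y), p (x0, y) * e (x0, y) :=
            (Finset.sum_subset (Finset.subset_univ _) hvan).symm
        _ = p (x0, y0) * e (x0, y0) + p (x0, y1) * e (x0, y1) := by
            rw [Finset.sum_insert (by simp [Ne.symm hy1ne]), Finset.sum_singleton]
        _ = 0 := by
            rw [ve1, ve2]
            linear_combination (-1 : ℝ) * hcc
    · by_cases hx1' : x = x1
      · rw [hx1']
        rw [if_pos rfl]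
        have hvan : ∀ y ∈ (Finset.univ : Finset Y), y ∉ ({y0} : Finset Y) →
            p (x1, y) * e (x1, y) = 0 := by
          intro y _ hy
          simp only [Finset.mem_singleton] at hy
          rw [ve0 (x1, y) (fun h => hx1ne (congrArg Prod.fst h))
            (fun h => hx1ne (congrArg Prod.fst h))
            (fun h => hy (congrArg Prod.snd h)), mul_zero]
        calc ∑ y, p (x1, y) * e (x1, y)
            = ∑ y ∈ ({y0} : Finset Y), p (x1, y) * e (x1, y) :=
              (Finset.sum_subset (Finset.subset_univ _) hvan).symm
          _ = p (x1, y0) * e (x1, y0) := Finset.sum_singleton _ _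
          _ = -p (x0, y0) := by
              rw [ve3]
              linear_combination (-1 : ℝ) * hbb
      · rw [if_neg hx1']
        refine Finset.sum_eq_zero fun y _ => ?_
        rw [ve0 (x, y) (fun h => hx0' (congrArg Prod.fst h))
          (fun h => hx0' (congrArg Prod.fst h))
          (fun h => hx1' (congrArg Prod.fst h)), mul_zero]
  -- column sums of p·e
  have hnY : ∀ y, (∑ x, p (x, y) * e (x, y)) = (if y = y1 then -p (x0, y0) else 0) := by
    intro y
    by_cases hy0' : y = y0
    · rw [hy0']
      rw [if_neg (Ne.symm hy1ne)]
      have hvan : ∀ x ∈ (Finset.univ : Finset X), x ∉ ({x0, x1} : Finset X) →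
          p (x, y0) * e (x, y0) = 0 := by
        intro x _ hx
        simp only [Finset.mem_insert, Finset.mem_singleton, not_or] at hx
        rw [ve0 (x, y0) (fun h => hx.1 (congrArg Prod.fst h))
          (fun h => hy1ne (congrArg Prod.snd h).symm)
          (fun h => hx.2 (congrArg Prod.fst h)), mul_zero]
      calc ∑ x, p (x, y0) * e (x, y0)
          = ∑ x ∈ ({x0, x1} : Finset X), p (x, y0) * e (x, y0) :=
            (Finset.sum_subset (Finset.subset_univ _) hvan).symm
        _ = p (x0, y0) * e (x0, y0) + p (x1, y0) * e (x1, y0) := by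
            rw [Finset.sum_insert (by simp [Ne.symm hx1ne]), Finset.sum_singleton]
        _ = 0 := by
            rw [ve1, ve3]
            linear_combination (-1 : ℝ) * hbb
    · by_cases hy1' : y = y1
      · rw [hy1']
        rw [if_pos rfl]
        have hvan : ∀ x ∈ (Finset.univ : Finset X), x ∉ ({x0} : Finset X) →
            p (x, y1) * e (x, y1) = 0 := by
          intro x _ hx
          simp only [Finset.mem_singleton] at hx
          rw [ve0 (x, y1) (fun h => hy1ne (congrArg Prod.snd h))
            (fun h => hx (congrArg Prod.fst h))
            (fun h => hy1ne (congrArg Prod.snd h)), mul_zero]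
        calc ∑ x, p (x, y1) * e (x, y1)
            = ∑ x ∈ ({x0} : Finset X), p (x, y1) * e (x, y1) :=
              (Finset.sum_subset (Finset.subset_univ _) hvan).symm
          _ = p (x0, y1) * e (x0, y1) := Finset.sum_singleton _ _
          _ = -p (x0, y0) := by
              rw [ve2]
              linear_combination (-1 : ℝ) * hcc
      · rw [if_neg hy1']
        refine Finset.sum_eq_zero fun x _ => ?_
        rw [ve0 (x, y) (fun h => hy0' (congrArg Prod.snd h))
          (fun h => hy1' (congrArg Prod.snd h))
          (fun h => hy0' (congrArg Prod.snd h)), mul_zero]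
  -- marginal distributions of q
  have hterm_t : ∀ x y, q (x, y, true) = p (x, y) / 2 + ε * (p (x, y) * e (x, y)) := by
    intro x y; rw [hfac_t]; ring
  have hterm_f : ∀ x y, q (x, y, false) = p (x, y) / 2 - ε * (p (x, y) * e (x, y)) := by
    intro x y; rw [hfac_f]; ring
  have hdXU_t : ∀ x, dist q (fun z : X × Y × Bool => (z.1, z.2.2)) (x, true)
      = dist p Prod.fst x / 2 + (if x = x1 then -(ε * p (x0, y0)) else 0) := by
    intro x
    rw [dist_cXU_eq, dist_fst_eq]
    simp_rw [hterm_t]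
    rw [Finset.sum_add_distrib, ← Finset.sum_div, ← Finset.mul_sum, hnX x]
    by_cases hx : x = x1
    · rw [if_pos hx, if_pos hx]; ring
    · rw [if_neg hx, if_neg hx]; ring
  have hdXU_f : ∀ x, dist q (fun z : X × Y × Bool => (z.1, z.2.2)) (x, false)
      = dist p Prod.fst x / 2 - (if x = x1 then -(ε * p (x0, y0)) else 0) := by
    intro x
    rw [dist_cXU_eq, dist_fst_eq]
    simp_rw [hterm_f]
    rw [Finset.sum_sub_distrib, ← Finset.sum_div, ← Finset.mul_sum, hnX x]
    by_cases hx : x = x1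
    · rw [if_pos hx, if_pos hx]; ring
    · rw [if_neg hx, if_neg hx]; ring
  have hdYU_t : ∀ y, dist q (fun z : X × Y × Bool => (z.2.1, z.2.2)) (y, true)
      = dist p Prod.snd y / 2 + (if y = y1 then -(ε * p (x0, y0)) else 0) := by
    intro y
    rw [dist_cYU_eq, dist_snd_eq]
    simp_rw [hterm_t]
    rw [Finset.sum_add_distrib, ← Finset.sum_div, ← Finset.mul_sum, hnY y]
    by_cases hy : y = y1
    · rw [if_pos hy, if_pos hy]; ring
    · rw [if_neg hy, if_neg hy]; ring
  have hdYU_f : ∀ y, dist q (fun z : X × Y × Bool => (z.2.1, z.2.2)) (y, false)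
      = dist p Prod.snd y / 2 - (if y = y1 then -(ε * p (x0, y0)) else 0) := by
    intro y
    rw [dist_cYU_eq, dist_snd_eq]
    simp_rw [hterm_f]
    rw [Finset.sum_sub_distrib, ← Finset.sum_div, ← Finset.mul_sum, hnY y]
    by_cases hy : y = y1
    · rw [if_pos hy, if_pos hy]; ring
    · rw [if_neg hy, if_neg hy]; ring
  have hA1 : (∑ x, ∑ y, p (x, y)) = 1 := by
    have h2 : (∑ x, ∑ y, p (x, y)) = ∑ z : X × Y, p z := (Fintype.sum_prod_type _).symm
    rw [h2, hp.2]
  have hB1 : (∑ x, ∑ y, p (x, y) * e (x, y)) = -p (x0, y0) := by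
    have h2 : (∑ x, ∑ y, p (x, y) * e (x, y)) = ∑ z : X × Y, p z * e z :=
      (Fintype.sum_prod_type (fun z : X × Y => p z * e z)).symm
    rw [h2, hebar]
  have hdU_t : dist q cU true = 1/2 + -(ε * p (x0, y0)) := by
    rw [dist_cU_eq]
    simp_rw [hterm_t]
    simp_rw [Finset.sum_add_distrib]
    simp_rw [← Finset.sum_div, ← Finset.mul_sum]
    rw [hA1, hB1]
    ring
  have hdU_f : dist q cU false = 1/2 - -(ε * p (x0, y0)) := by
    rw [dist_cU_eq]
    simp_rw [hterm_f]
    simp_rw [Finset.sum_sub_distrib]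
    simp_rw [← Finset.sum_div, ← Finset.mul_sum]
    rw [hA1, hB1]
    ring
  -- useful single-point bounds
  have hble : p (x1, y0) ≤ dist p Prod.fst x1 := by
    rw [dist_fst_eq]
    exact Finset.single_le_sum (f := fun y => p (x1, y)) (fun y _ => hp0 _) (Finset.mem_univ y0)
  have hcle : p (x0, y1) ≤ dist p Prod.snd y1 := by
    rw [dist_snd_eq]
    exact Finset.single_le_sum (f := fun x => p (x, y1)) (fun x _ => hp0 _) (Finset.mem_univ x0)
  have hs'pos : 0 < dist p Prod.fst x1 := lt_of_lt_of_le hbpos hble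
  have hr'pos : 0 < dist p Prod.snd y1 := lt_of_lt_of_le hcpos hcle
  -- entropy of U
  have hHU : H q cU = 1 - KLb (ε * p (x0, y0)) := by
    have h0 : H q cU = ∑ u : Bool, -(dist q cU u * Real.logb 2 (dist q cU u)) := rfl
    rw [h0, Fintype.sum_bool, hdU_t, hdU_f]
    have hφ := sum_philog (w := 1) (t := -(ε * p (x0, y0))) one_pos (by
      rw [abs_neg, abs_of_nonneg (by positivity)]
      linarith only [hεa14])
    rw [hφ, Real.logb_one, div_one, klb_even]
    ring
  -- entropy of (X, U)
  have hHXU : H q (fun z : X × Y × Bool => (z.1, z.2.2)) = H p Prod.fst + 1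
      - dist p Prod.fst x1 * KLb (ε * p (x0, y0) / dist p Prod.fst x1) := by
    have h0 : H q (fun z : X × Y × Bool => (z.1, z.2.2))
        = ∑ zz : X × Bool, -(dist q (fun z : X × Y × Bool => (z.1, z.2.2)) zz
            * Real.logb 2 (dist q (fun z : X × Y × Bool => (z.1, z.2.2)) zz)) := rfl
    rw [h0, Fintype.sum_prod_type]
    have hper : ∀ x, (∑ u : Bool, -(dist q (fun z : X × Y × Bool => (z.1, z.2.2)) (x, u)
          * Real.logb 2 (dist q (fun z : X × Y × Bool => (z.1, z.2.2)) (x, u))))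
        = -(dist p Prod.fst x * Real.logb 2 (dist p Prod.fst x)) + dist p Prod.fst x
          - (if x = x1 then dist p Prod.fst x1 * KLb (ε * p (x0, y0) / dist p Prod.fst x1)
              else 0) := by
      intro x
      rw [Fintype.sum_bool, hdXU_t x, hdXU_f x]
      by_cases hx : x = x1
      · rw [if_pos hx, if_pos hx, hx]
        have hφ := sum_philog (w := dist p Prod.fst x1) (t := -(ε * p (x0, y0))) hs'pos (by
          rw [abs_neg, abs_of_nonneg (by positivity)]
          linarith only [hεab, hble, hbpos])
        rw [hφ, neg_div, klb_even]
      · rw [if_neg hx, if_neg hx, add_zero, sub_zero, sub_zero]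
        exact half_log (dist_nonneg' hp0 Prod.fst x)
    simp_rw [hper]
    rw [Finset.sum_sub_distrib, Finset.sum_add_distrib]
    have hHf : (∑ x, -(dist p Prod.fst x * Real.logb 2 (dist p Prod.fst x))) = H p Prod.fst := rfl
    have hsum1 : (∑ x, dist p Prod.fst x) = 1 := by rw [sum_dist, hp.2]
    have hite : (∑ x, if x = x1
        then dist p Prod.fst x1 * KLb (ε * p (x0, y0) / dist p Prod.fst x1) else 0)
        = dist p Prod.fst x1 * KLb (ε * p (x0, y0) / dist p Prod.fst x1) := by simp
    rw [hHf, hsum1, hite]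
  -- entropy of (Y, U)
  have hHYU : H q (fun z : X × Y × Bool => (z.2.1, z.2.2)) = H p Prod.snd + 1
      - dist p Prod.snd y1 * KLb (ε * p (x0, y0) / dist p Prod.snd y1) := by
    have h0 : H q (fun z : X × Y × Bool => (z.2.1, z.2.2))
        = ∑ zz : Y × Bool, -(dist q (fun z : X × Y × Bool => (z.2.1, z.2.2)) zz
            * Real.logb 2 (dist q (fun z : X × Y × Bool => (z.2.1, z.2.2)) zz)) := rfl
    rw [h0, Fintype.sum_prod_type]
    have hper : ∀ y, (∑ u : Bool, -(dist q (fun z : X × Y × Bool => (z.2.1, z.2.2)) (y, u)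
          * Real.logb 2 (dist q (fun z : X × Y × Bool => (z.2.1, z.2.2)) (y, u))))
        = -(dist p Prod.snd y * Real.logb 2 (dist p Prod.snd y)) + dist p Prod.snd y
          - (if y = y1 then dist p Prod.snd y1 * KLb (ε * p (x0, y0) / dist p Prod.snd y1)
              else 0) := by
      intro y
      rw [Fintype.sum_bool, hdYU_t y, hdYU_f y]
      by_cases hy : y = y1
      · rw [if_pos hy, if_pos hy, hy]
        have hφ := sum_philog (w := dist p Prod.snd y1) (t := -(ε * p (x0, y0))) hr'pos (by
          rw [abs_neg, abs_of_nonneg (by positivity)]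
          linarith only [hεac, hcle, hcpos])
        rw [hφ, neg_div, klb_even]
      · rw [if_neg hy, if_neg hy, add_zero, sub_zero, sub_zero]
        exact half_log (dist_nonneg' hp0 Prod.snd y)
    simp_rw [hper]
    rw [Finset.sum_sub_distrib, Finset.sum_add_distrib]
    have hHs : (∑ y, -(dist p Prod.snd y * Real.logb 2 (dist p Prod.snd y))) = H p Prod.snd := rfl
    have hsum1 : (∑ y, dist p Prod.snd y) = 1 := by rw [sum_dist, hp.2]
    have hite : (∑ y, if y = y1
        then dist p Prod.snd y1 * KLb (ε * p (x0, y0) / dist p Prod.snd y1) else 0)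
        = dist p Prod.snd y1 * KLb (ε * p (x0, y0) / dist p Prod.snd y1) := by simp
    rw [hHs, hsum1, hite]
  -- entropy of (X, Y, U)
  have hHXYU : H q (fun z : X × Y × Bool => ((z.1, z.2.1), z.2.2))
      = (∑ z : X × Y, -(p z * Real.logb 2 (p z))) + 1 - ∑ z : X × Y, p z * KLb (ε * e z) := by
    have h0 : H q (fun z : X × Y × Bool => ((z.1, z.2.1), z.2.2))
        = ∑ w : (X × Y) × Bool, -(dist q (fun z : X × Y × Bool => ((z.1, z.2.1), z.2.2)) w
            * Real.logb 2 (dist q (fun z : X × Y × Bool => ((z.1, z.2.1), z.2.2)) w)) := rfl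
    rw [h0, Fintype.sum_prod_type]
    have hdv : ∀ (v : X × Y) (u : Bool),
        dist q (fun z : X × Y × Bool => ((z.1, z.2.1), z.2.2)) (v, u) = q (v.1, v.2, u) := by
      intro v u
      have h := dist_tripleF_eq q v.1 v.2 u
      rw [Prod.mk.eta] at h
      exact h
    have hper : ∀ v : X × Y, (∑ u : Bool,
          -(dist q (fun z : X × Y × Bool => ((z.1, z.2.1), z.2.2)) (v, u)
            * Real.logb 2 (dist q (fun z : X × Y × Bool => ((z.1, z.2.1), z.2.2)) (v, u))))
        = -(p v * Real.logb 2 (p v)) + p v - p v * KLb (ε * e v) := by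
      intro v
      rw [Fintype.sum_bool, hdv v true, hdv v false]
      rcases (hp0 v).eq_or_lt with hz | hz
      · have hq1 : q (v.1, v.2, true) = 0 := by
          rw [hfac_t, Prod.mk.eta, ← hz, zero_mul]
        have hq2 : q (v.1, v.2, false) = 0 := by
          rw [hfac_f, Prod.mk.eta, ← hz, zero_mul]
        rw [hq1, hq2, ← hz]
        simp
      · have hqt : q (v.1, v.2, true) = p v / 2 + ε * e v * p v := by
          rw [hfac_t, Prod.mk.eta]; ring
        have hqf : q (v.1, v.2, false) = p v / 2 - ε * e v * p v := by
          rw [hfac_f, Prod.mk.eta]; ring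
        rw [hqt, hqf]
        have hφ := sum_philog (w := p v) (t := ε * e v * p v) hz (by
          rw [abs_mul, abs_of_pos hz]
          have hm : |ε * e v| * p v ≤ 1/4 * p v :=
            mul_le_mul_of_nonneg_right (habs v) hz.le
          linarith only [hm, hz])
        rw [hφ, mul_div_cancel_right₀ _ hz.ne']
    simp_rw [hper]
    rw [Finset.sum_sub_distrib, Finset.sum_add_distrib, hp.2]
  have hHpair : H p (fun z : X × Y => (z.1, z.2)) = ∑ z : X × Y, -(p z * Real.logb 2 (p z)) := by
    have h0 : H p (fun z : X × Y => (z.1, z.2))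
        = ∑ w : X × Y, -(dist p (fun z : X × Y => (z.1, z.2)) w
            * Real.logb 2 (dist p (fun z : X × Y => (z.1, z.2)) w)) := rfl
    rw [h0]
    exact Finset.sum_congr rfl fun w _ => by rw [dist_pairF_eq]
  -- assemble Δ
  have hIceq := Ic_eq q
  have hI2eq : I2 p Prod.fst Prod.snd
      = H p Prod.fst + H p Prod.snd - H p (fun z : X × Y => (z.1, z.2)) := rfl
  have hDelta : Ic q cX cY cU - I2 p Prod.fst Prod.snd
      = KLb (ε * p (x0, y0)) + (∑ z : X × Y, p z * KLb (ε * e z))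
        - dist p Prod.fst x1 * KLb (ε * p (x0, y0) / dist p Prod.fst x1)
        - dist p Prod.snd y1 * KLb (ε * p (x0, y0) / dist p Prod.snd y1) := by
    rw [hIceq, hI2eq, hHXU, hHYU, hHU, hHXYU, hHpair]
    ring
  rw [hDelta]
  -- positivity
  have hklb_nn : ∀ z : X × Y, 0 ≤ KLb (ε * e z) := fun z =>
    klb_nonneg (lt_of_le_of_lt (habs z) (by norm_num))
  have hsub : p (x0, y0) * KLb (ε * e (x0, y0))
      + (p (x0, y1) * KLb (ε * e (x0, y1)) + p (x1, y0) * KLb (ε * e (x1, y0)))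
      ≤ ∑ z : X × Y, p z * KLb (ε * e z) := by
    have h := Finset.sum_le_sum_of_subset_of_nonneg
      (Finset.subset_univ ({(x0, y0), (x0, y1), (x1, y0)} : Finset (X × Y)))
      (fun z _ _ => mul_nonneg (hp0 z) (hklb_nn z))
    rw [Finset.sum_insert hnot1, Finset.sum_insert hnot2, Finset.sum_singleton] at h
    exact h
  have hv1 : KLb (ε * e (x0, y0)) = KLb ε := by rw [ve1, mul_one]
  have hv2 : KLb (ε * e (x0, y1)) = KLb (ε * p (x0, y0) / p (x0, y1)) := by
    rw [ve2, mul_neg, klb_even, mul_div_assoc]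
  have hv3 : KLb (ε * e (x1, y0)) = KLb (ε * p (x0, y0) / p (x1, y0)) := by
    rw [ve3, mul_neg, klb_even, mul_div_assoc]
  rw [hv1, hv2, hv3] at hsub
  have hpers1 : dist p Prod.fst x1 * KLb (ε * p (x0, y0) / dist p Prod.fst x1)
      ≤ p (x1, y0) * KLb (ε * p (x0, y0) / p (x1, y0)) :=
    klb_persp hbpos hble (by positivity) (by
      rw [div_lt_iff₀ hbpos]
      linarith only [hεab, hbpos])
  have hpers2 : dist p Prod.snd y1 * KLb (ε * p (x0, y0) / dist p Prod.snd y1)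
      ≤ p (x0, y1) * KLb (ε * p (x0, y0) / p (x0, y1)) :=
    klb_persp hcpos hcle (by positivity) (by
      rw [div_lt_iff₀ hcpos]
      linarith only [hεac, hcpos])
  have hKε : 0 < KLb ε := klb_pos hεpos (by linarith only [hε14])
  have hK0 : 0 ≤ KLb (ε * p (x0, y0)) :=
    klb_nonneg (by rw [abs_of_nonneg (by positivity)]; linarith only [hεa14])
  linarith only [hsub, hpers1, hpers2, hK0, mul_pos hpos hKε]

end Construction

section ZeroMem

variable {X Y : Type} [Fintype X] [Fintype Y]

lemma zero_mem (p : X × Y → ℝ) (hp : IsPMF p) :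
    ∃ (U : Type) (_ : Fintype U) (q : X × Y × U → ℝ), IsAux p q ∧
      (0:ℝ) = Ic q cX cY cU - I2 p Prod.fst Prod.snd := by
  classical
  have haux : IsAux p (fun z : X × Y × Unit => p (z.1, z.2.1)) := by
    refine ⟨⟨fun a => hp.1 _, ?_⟩, fun x y => by simp⟩
    have h1 : (∑ z : X × Y × Unit, p (z.1, z.2.1)) = ∑ x, ∑ y, ∑ _u : Unit, p (x, y) :=
      sum_triple (fun z : X × Y × Unit => p (z.1, z.2.1))
    show (∑ z : X × Y × Unit, p (z.1, z.2.1)) = 1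
    rw [h1]
    have h3 : ∀ (x : X) (y : Y), (∑ _u : Unit, p (x, y)) = p (x, y) := fun x y => by simp
    simp_rw [h3]
    have h2 : (∑ x, ∑ y, p (x, y)) = ∑ z : X × Y, p z := (Fintype.sum_prod_type p).symm
    rw [h2, hp.2]
  refine ⟨Unit, inferInstance, fun z : X × Y × Unit => p (z.1, z.2.1), haux, ?_⟩
  rw [delta_repr haux]
  symm
  refine Finset.sum_eq_zero fun a _ => ?_
  have hU1 : dist (fun z : X × Y × Unit => p (z.1, z.2.1)) cU a.2.2 = 1 := by
    rw [dist_cU_eq]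
    have h2 : (∑ x, ∑ y, p (x, y)) = ∑ z : X × Y, p z := (Fintype.sum_prod_type p).symm
    rw [h2, hp.2]
  have hXU : dist (fun z : X × Y × Unit => p (z.1, z.2.1))
      (fun z : X × Y × Unit => (z.1, z.2.2)) (a.1, a.2.2) = dist p Prod.fst a.1 := by
    rw [dist_cXU_eq, dist_fst_eq]
  have hYU : dist (fun z : X × Y × Unit => p (z.1, z.2.1))
      (fun z : X × Y × Unit => (z.2.1, z.2.2)) (a.2.1, a.2.2) = dist p Prod.snd a.2.1 := by
    rw [dist_cYU_eq, dist_snd_eq]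
  show p (a.1, a.2.1) * (Real.logb 2 (dist (fun z : X × Y × Unit => p (z.1, z.2.1)) cU a.2.2)
      + Real.logb 2 (p (a.1, a.2.1))
      + Real.logb 2 (dist p Prod.fst a.1) + Real.logb 2 (dist p Prod.snd a.2.1)
      - Real.logb 2 (dist (fun z : X × Y × Unit => p (z.1, z.2.1))
          (fun z : X × Y × Unit => (z.1, z.2.2)) (a.1, a.2.2))
      - Real.logb 2 (dist (fun z : X × Y × Unit => p (z.1, z.2.1))
          (fun z : X × Y × Unit => (z.2.1, z.2.2)) (a.2.1, a.2.2))
      - Real.logb 2 (p (a.1, a.2.1))) = 0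
  rw [hU1, hXU, hYU, Real.logb_one]
  ring

end ZeroMem

/-- `G_NNI(X;Y) = 0` iff for every `(x,y)` with `p(x,y) > 0` one has
`p_{X|Y}(x|y) = 1` (i.e. `p(x,y) = p_Y(y)`) or `p_{Y|X}(y|x) = 1` (i.e. `p(x,y) = p_X(x)`). -/
theorem stmt10 {X Y : Type} [Fintype X] [Fintype Y] (p : X × Y → ℝ) (hp : IsPMF p) :
    GNNI p = 0 ↔
      ∀ x y, 0 < p (x, y) → p (x, y) = dist p Prod.snd y ∨ p (x, y) = dist p Prod.fst x := by
  classical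
  set S : Set ℝ := {r | ∃ (U : Type) (_ : Fintype U) (q : X × Y × U → ℝ), IsAux p q ∧
      r = Ic q cX cY cU - I2 p Prod.fst Prod.snd} with hSdef
  have hGS : GNNI p = sSup S := rfl
  have hmem0 : (0:ℝ) ∈ S := zero_mem p hp
  have hub : ∀ r ∈ S, r ≤ H p Prod.fst - I2 p Prod.fst Prod.snd := by
    rintro r ⟨U, iU, q, hq, rfl⟩
    have := @ic_le X Y U _ _ iU p hp q hq
    linarith
  have hbdd : BddAbove S := ⟨H p Prod.fst - I2 p Prod.fst Prod.snd, fun r hr => hub r hr⟩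
  constructor
  · intro hG x y hxy
    by_contra hcon
    push_neg at hcon
    obtain ⟨q, hq, hdel⟩ := exists_pos_delta p hp x y hxy hcon.1 hcon.2
    have hmem : Ic q cX cY cU - I2 p Prod.fst Prod.snd ∈ S :=
      ⟨Bool, inferInstance, q, hq, rfl⟩
    have hle := le_csSup hbdd hmem
    rw [← hGS, hG] at hle
    linarith
  · intro hcond
    have hle0 : ∀ r ∈ S, r ≤ 0 := by
      rintro r ⟨U, iU, q, hq, rfl⟩
      exact @main_le X Y U _ _ iU p hp
        (fun x y hne => hcond x y ((hp.1 _).lt_of_ne' hne)) q hq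
    rw [hGS]
    exact le_antisymm (csSup_le ⟨0, hmem0⟩ hle0) (le_csSup ⟨0, fun r hr => hle0 r hr⟩ hmem0)

end GW
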